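/- arXiv:2510.15932 — 2 statements merged into one kernel-verified Lean document; each statement's English description precedes it below -/
import Mathlib

section
/- Let F be a field of characteristic zero and let Aᵢ, Bᵢ ∈ M_{mᵢ}(F) for 1 ≤ i ≤ s be such that Aᵢ and Bᵢ are polynomially equivalent for each i. If the characteristic polynomials of A₁, …, A_s are pairwise coprime and the characteristic polynomials of B₁, …, B_s are pairwise coprime, then the block-diagonal matrices A = diag(A₁, …, A_s) and B = diag(B₁, …, B_s) are polynomially equivalent. -/
/-- `A` and `B` are polynomially equivalent: each is a polynomial in the other. -/
def PolyEquiv {α : Type*} [Fintype α] [DecidableEq α] {F : Type*} [Field F]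
    (A B : Matrix α α F) : Prop :=
  ∃ f g : Polynomial F, B = Polynomial.aeval A f ∧ A = Polynomial.aeval B g

/-- Chinese remainder theorem for polynomials over a field. -/
lemma crt_poly {F : Type*} [Field F] {s : ℕ} (p f : Fin s → Polynomial F)
    (hp : ∀ i j, i ≠ j → IsCoprime (p i) (p j)) :
    ∃ h : Polynomial F, ∀ i, p i ∣ h - f i := by
  have hco : Pairwise (Function.onFun IsCoprime fun i => Ideal.span {p i}) := fun i j hij =>
    (Ideal.isCoprime_span_singleton_iff _ _).mpr (hp i j hij)
  obtain ⟨h, hh⟩ := Ideal.quotientInfToPiQuotient_surj hco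
    (fun i => Ideal.Quotient.mk _ (f i))
  obtain ⟨h, rfl⟩ := Ideal.Quotient.mk_surjective h
  refine ⟨h, fun i => ?_⟩
  have := congrFun hh i
  rw [Ideal.quotientInfToPiQuotient_mk', Ideal.Quotient.eq,
    Ideal.mem_span_singleton] at this
  exact this

/-- `blockDiagonal'` as an algebra homomorphism. -/
def bdAlgHom {s : ℕ} (m : Fin s → ℕ) (F : Type*) [Field F] :
    (∀ i : Fin s, Matrix (Fin (m i)) (Fin (m i)) F) →ₐ[F]
      Matrix (Σ i : Fin s, Fin (m i)) (Σ i : Fin s, Fin (m i)) F :=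
  { Matrix.blockDiagonal'RingHom (fun i => Fin (m i)) F with
    commutes' := fun c => by
      have h : (algebraMap F (∀ i : Fin s, Matrix (Fin (m i)) (Fin (m i)) F)) c
          = fun i => Matrix.diagonal (fun _ => c) := by
        funext i
        rw [Pi.algebraMap_apply, Matrix.algebraMap_eq_diagonal]
        rfl
      show Matrix.blockDiagonal' _ = _
      rw [h, Matrix.blockDiagonal'_diagonal, Matrix.algebraMap_eq_diagonal]
      rfl }

lemma aeval_blockDiagonal' {s : ℕ} {m : Fin s → ℕ} {F : Type*} [Field F]
    (M : ∀ i : Fin s, Matrix (Fin (m i)) (Fin (m i)) F) (p : Polynomial F) :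
    Polynomial.aeval (Matrix.blockDiagonal' M) p
      = Matrix.blockDiagonal' (fun i => Polynomial.aeval (M i) p) := by
  have h1 : Polynomial.aeval ((bdAlgHom m F) M) p = (bdAlgHom m F) (Polynomial.aeval M p) :=
    Polynomial.aeval_algHom_apply (bdAlgHom m F) M p
  have h2 : ∀ i, Polynomial.aeval M p i = Polynomial.aeval (M i) p := fun i =>
    (Polynomial.aeval_algHom_apply (Pi.evalAlgHom F _ i) M p).symm
  calc Polynomial.aeval (Matrix.blockDiagonal' M) p
      = (bdAlgHom m F) (Polynomial.aeval M p) := h1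
    _ = Matrix.blockDiagonal' (fun i => Polynomial.aeval (M i) p) := by
        show Matrix.blockDiagonal' _ = _
        rw [show (Polynomial.aeval M p : ∀ i, _) = fun i => Polynomial.aeval (M i) p
          from funext h2]

theorem polyEquiv_blockDiagonal {s : ℕ} {m : Fin s → ℕ} {F : Type*} [Field F] [CharZero F]
    (A B : ∀ i : Fin s, Matrix (Fin (m i)) (Fin (m i)) F)
    (hAB : ∀ i : Fin s, PolyEquiv (A i) (B i))
    (hA : ∀ i j : Fin s, i ≠ j → IsCoprime (A i).charpoly (A j).charpoly)
    (hB : ∀ i j : Fin s, i ≠ j → IsCoprime (B i).charpoly (B j).charpoly) :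
    PolyEquiv (Matrix.blockDiagonal' A) (Matrix.blockDiagonal' B) := by
  choose f g hf hg using hAB
  obtain ⟨F₁, hF₁⟩ := crt_poly (fun i => (A i).charpoly) f hA
  obtain ⟨G₁, hG₁⟩ := crt_poly (fun i => (B i).charpoly) g hB
  refine ⟨F₁, G₁, ?_, ?_⟩
  · rw [aeval_blockDiagonal']
    have h : ∀ i, Polynomial.aeval (A i) F₁ = B i := by
      intro i
      obtain ⟨q, hq⟩ := hF₁ i
      have hFi : F₁ = f i + (A i).charpoly * q := by linear_combination hq
      rw [hFi, map_add, map_mul, Matrix.aeval_self_charpoly, zero_mul, add_zero, ← hf i]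
    rw [funext h]
  · rw [aeval_blockDiagonal']
    have h : ∀ i, Polynomial.aeval (B i) G₁ = A i := by
      intro i
      obtain ⟨q, hq⟩ := hG₁ i
      have hGi : G₁ = g i + (B i).charpoly * q := by linear_combination hq
      rw [hGi, map_add, map_mul, Matrix.aeval_self_charpoly, zero_mul, add_zero, ← hg i]
    rw [funext h]
end

section
/- Let F be a field of characteristic zero and let A ∈ GLₙ(F) have n distinct eigenvalues in F. Then the dimension of 𝒞𝓛(A) as an F-vector space equals the number of eigenvalues λ of A such that −λ is also an eigenvalue of A. -/
/-- The clifforder of a matrix `A` (all matrices anti-commuting with `A`), as an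
`F`-linear subspace of the matrix space. -/
def clifforder {n : ℕ} {F : Type*} [Field F] (A : Matrix (Fin n) (Fin n) F) :
    Submodule F (Matrix (Fin n) (Fin n) F) where
  carrier := {X | A * X = -(X * A)}
  add_mem' := by
    intro X Y hX hY
    simp only [Set.mem_setOf_eq] at *
    rw [mul_add, add_mul, hX, hY, neg_add]
  zero_mem' := by simp
  smul_mem' := by
    intro c X hX
    simp only [Set.mem_setOf_eq] at *
    rw [mul_smul_comm, smul_mul_assoc, hX, smul_neg]

open Matrix Polynomial

section Aux
variable {F : Type*} [Field F] {n : ℕ}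

lemma mem_clifforder_iff (A X : Matrix (Fin n) (Fin n) F) :
    X ∈ clifforder A ↔ A * X = -(X * A) := Iff.rfl

/-- Matrices supported on a finite set of index pairs. -/
def suppSub (S : Finset (Fin n × Fin n)) : Submodule F (Matrix (Fin n) (Fin n) F) where
  carrier := {X | ∀ p : Fin n × Fin n, p ∉ S → X p.1 p.2 = 0}
  add_mem' := by
    intro X Y hX hY p hp
    simp [Matrix.add_apply, hX p hp, hY p hp]
  zero_mem' := by intro p hp; rfl
  smul_mem' := by
    intro c X hX p hp
    simp [Matrix.smul_apply, hX p hp]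

noncomputable def suppEquiv (S : Finset (Fin n × Fin n)) :
    (suppSub (F := F) S) ≃ₗ[F] (S → F) where
  toFun X p := X.1 p.1.1 p.1.2
  map_add' X Y := rfl
  map_smul' c X := rfl
  invFun g := ⟨Matrix.of fun i j => if h : (i, j) ∈ S then g ⟨(i, j), h⟩ else 0, by
    intro p hp
    simp only [Matrix.of_apply]
    rw [dif_neg]
    simpa using hp⟩
  left_inv := by
    rintro ⟨X, hX⟩
    ext i j
    simp only [Matrix.of_apply]
    by_cases h : (i, j) ∈ S
    · rw [dif_pos h]
    · rw [dif_neg h, hX (i, j) h]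
  right_inv := by
    intro g
    ext p
    simp only [Matrix.of_apply]
    rw [dif_pos]

lemma finrank_suppSub (S : Finset (Fin n × Fin n)) :
    Module.finrank F (suppSub (F := F) S) = S.card := by
  rw [(suppEquiv (F := F) S).finrank_eq, Module.finrank_fintype_fun_eq_card, Fintype.card_coe]

noncomputable def conjEquiv (P : Matrix (Fin n) (Fin n) F) [Invertible P] :
    Matrix (Fin n) (Fin n) F ≃ₗ[F] Matrix (Fin n) (Fin n) F where
  toFun X := ⅟P * X * P
  invFun X := P * X * ⅟P
  map_add' X Y := by noncomm_ring
  map_smul' c X := by simp [Matrix.mul_smul, Matrix.smul_mul]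
  left_inv X := by simp [mul_assoc, invOf_mul_cancel_left, mul_invOf_cancel_left]
  right_inv X := by simp [mul_assoc, invOf_mul_cancel_left, mul_invOf_cancel_left]

lemma conj_clifford_iff (A D P : Matrix (Fin n) (Fin n) F) [Invertible P]
    (hAP : A * P = P * D) (X : Matrix (Fin n) (Fin n) F) :
    (A * X = -(X * A)) ↔ (D * (⅟P * X * P) = -((⅟P * X * P) * D)) := by
  have hD : D = ⅟P * A * P := by
    rw [Matrix.mul_assoc, hAP, ← Matrix.mul_assoc, invOf_mul_self, Matrix.one_mul]
  subst hD
  constructor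
  · intro h
    have h' : A * (X * P) = -(X * (A * P)) := by
      rw [← Matrix.mul_assoc, h]; simp [Matrix.mul_assoc]
    simp only [mul_assoc, invOf_mul_cancel_left, mul_invOf_cancel_left, mul_neg, neg_mul]
    rw [h', mul_neg]
  · intro h
    have h' := congrArg (fun W => P * W * ⅟P) h
    simpa [mul_assoc, invOf_mul_cancel_left, mul_invOf_cancel_left, mul_invOf_self,
      invOf_mul_self] using h'

lemma exists_eigenvec (A : Matrix (Fin n) (Fin n) F) (μ : F) (h : A.charpoly.IsRoot μ) :
    ∃ v : Fin n → F, v ≠ 0 ∧ A *ᵥ v = μ • v := by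
  have hdet : (Matrix.scalar (Fin n) μ - A).det = 0 := by
    have := h
    rw [Polynomial.IsRoot, Matrix.charpoly, eval_det, matPolyEquiv_charmatrix] at this
    simpa using this
  obtain ⟨v, hv0, hv⟩ := (Matrix.exists_mulVec_eq_zero_iff).2 hdet
  refine ⟨v, hv0, ?_⟩
  rw [Matrix.sub_mulVec, sub_eq_zero] at hv
  rw [← hv, Matrix.scalar_apply]
  ext i
  simp [Matrix.mulVec_diagonal]

lemma roots_eq_of_distinct (A : Matrix (Fin n) (Fin n) F) (lam : Fin n → F)
    (hinj : Function.Injective lam) (hroot : ∀ i, A.charpoly.IsRoot (lam i)) :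
    ∀ μ : F, A.charpoly.IsRoot μ ↔ ∃ i, lam i = μ := by
  classical
  have hne : A.charpoly ≠ 0 := A.charpoly_monic.ne_zero
  have hnodup : (Finset.univ.val.map lam).Nodup := Finset.univ.nodup.map hinj
  have hle : Finset.univ.val.map lam ≤ A.charpoly.roots := by
    rw [Multiset.le_iff_count]
    intro a
    by_cases hmem : a ∈ Finset.univ.val.map lam
    · rw [Multiset.count_eq_one_of_mem hnodup hmem, Nat.one_le_iff_ne_zero,
        ← Nat.pos_iff_ne_zero, Multiset.count_pos]
      obtain ⟨i, _, rfl⟩ := Multiset.mem_map.mp hmem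
      exact (Polynomial.mem_roots hne).mpr (hroot i)
    · rw [Multiset.count_eq_zero_of_notMem hmem]; exact Nat.zero_le _
  have heq : A.charpoly.roots = Finset.univ.val.map lam := by
    symm
    apply Multiset.eq_of_le_of_card_le hle
    calc A.charpoly.roots.card ≤ A.charpoly.natDegree := Polynomial.card_roots' _
    _ = Fintype.card (Fin n) := A.charpoly_natDegree_eq_dim
    _ = (Finset.univ.val.map lam).card := by simp
  intro μ
  constructor
  · intro h
    have : μ ∈ A.charpoly.roots := (Polynomial.mem_roots hne).mpr h
    rw [heq, Multiset.mem_map] at this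
    obtain ⟨i, _, hi⟩ := this
    exact ⟨i, hi⟩
  · rintro ⟨i, rfl⟩; exact hroot i

end Aux

theorem finrank_clifforder_eq {n : ℕ} {F : Type*} [Field F] [CharZero F]
    (A : Matrix (Fin n) (Fin n) F) (hA : IsUnit A)
    (heig : ∃ lam : Fin n → F, Function.Injective lam ∧ ∀ i, A.charpoly.IsRoot (lam i)) :
    Module.finrank F (clifforder A) =
      {μ : F | A.charpoly.IsRoot μ ∧ A.charpoly.IsRoot (-μ)}.ncard := by
  classical
  obtain ⟨lam, hinj, hroot⟩ := heig
  rcases Nat.eq_zero_or_pos n with hn | hn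
  · subst hn
    have h1 : A.charpoly = 1 := by
      have hd : A.charpoly.natDegree = 0 := by
        rw [A.charpoly_natDegree_eq_dim]; simp
      exact A.charpoly_monic.natDegree_eq_zero.mp hd
    have h2 : {μ : F | A.charpoly.IsRoot μ ∧ A.charpoly.IsRoot (-μ)} = ∅ := by
      ext μ; simp [h1, Polynomial.IsRoot]
    rw [h2, Set.ncard_empty]
    have : Subsingleton (Matrix (Fin 0) (Fin 0) F) := by
      constructor; intro a b; ext i j; exact absurd i.2 (by omega)
    exact Module.finrank_zero_of_subsingleton
  haveI : Nonempty (Fin n) := Fin.pos_iff_nonempty.mp hn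
  have hIsRoot : ∀ μ : F, A.charpoly.IsRoot μ ↔ ∃ i, lam i = μ :=
    roots_eq_of_distinct A lam hinj hroot
  -- eigenbasis
  choose v hv0 hveq using fun i => exists_eigenvec A (lam i) (hroot i)
  have hli : LinearIndependent F v := by
    apply Module.End.eigenvectors_linearIndependent' (Matrix.mulVecLin A) lam hinj v
    intro i
    refine ⟨?_, hv0 i⟩
    rw [Module.End.mem_eigenspace_iff]
    simpa [Matrix.mulVecLin_apply] using hveq i
  have hcard : Fintype.card (Fin n) = Module.finrank F (Fin n → F) := by simp
  let b : Module.Basis (Fin n) F (Fin n → F) := basisOfLinearIndependentOfCardEqFinrank hli hcard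
  have hb : ⇑b = v := coe_basisOfLinearIndependentOfCardEqFinrank _ _
  set D : Matrix (Fin n) (Fin n) F := Matrix.diagonal lam with hDdef
  set P : Matrix (Fin n) (Fin n) F := (Pi.basisFun F (Fin n)).toMatrix ⇑b with hPdef
  haveI : Invertible P := (Pi.basisFun F (Fin n)).invertibleToMatrix b
  have hPij : ∀ i j, P i j = v j i := by
    intro i j
    rw [hPdef, Module.Basis.toMatrix_apply, hb]
    simp
  have hAP : A * P = P * D := by
    ext i j
    have h1 : (A * P) i j = (A *ᵥ (v j)) i := by
      simp [Matrix.mul_apply, Matrix.mulVec, dotProduct, hPij]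
    have h2 : (P * D) i j = lam j * v j i := by
      rw [hDdef, Matrix.mul_diagonal, hPij, mul_comm]
    rw [h1, h2, hveq j]
    simp
  -- transport to diagonal
  have hmap : (clifforder A).map (conjEquiv P).toLinearMap = clifforder D := by
    ext X
    simp only [Submodule.mem_map]
    constructor
    · rintro ⟨Y, hY, rfl⟩
      exact (conj_clifford_iff A D P hAP Y).mp hY
    · intro hX
      refine ⟨(conjEquiv P).symm X, ?_, by simp⟩
      rw [mem_clifforder_iff, conj_clifford_iff A D P hAP]
      have hc : ⅟P * ((conjEquiv P).symm X) * P = X := by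
        show ⅟P * (P * X * ⅟P) * P = X
        simp [mul_assoc, invOf_mul_cancel_left, mul_invOf_cancel_left]
      rw [hc]
      exact hX
  have hfr : Module.finrank F (clifforder A) = Module.finrank F (clifforder D) := by
    rw [← hmap]
    exact (LinearEquiv.finrank_map_eq (conjEquiv P) (clifforder A)).symm
  -- diagonal computation
  set S : Finset (Fin n × Fin n) := Finset.univ.filter (fun p => lam p.1 + lam p.2 = 0) with hS
  have hDS : clifforder D = suppSub S := by
    ext X
    rw [mem_clifforder_iff]
    constructor
    · intro h p hp
      have hentry := congrFun (congrFun h p.1) p.2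
      rw [hDdef] at hentry
      simp only [Matrix.diagonal_mul, Matrix.mul_diagonal, Matrix.neg_apply] at hentry
      have hentry' : (lam p.1 + lam p.2) * X p.1 p.2 = 0 := by
        linear_combination hentry
      have hne : lam p.1 + lam p.2 ≠ 0 := by
        intro hc
        exact hp (by simp [hS, hc])
      exact (mul_eq_zero.mp hentry').resolve_left hne
    · intro h
      ext i j
      rw [Matrix.neg_apply, hDdef, Matrix.diagonal_mul, Matrix.mul_diagonal]
      by_cases hij : (i, j) ∈ S
      · have hsum : lam i + lam j = 0 := by simpa [hS] using hij
        have : lam i = -lam j := by linear_combination hsum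
        rw [this]; ring
      · have hz : X i j = 0 := h (i, j) hij
        rw [hz]; ring
  rw [hfr, hDS, finrank_suppSub]
  -- cardinality computation
  set s : Set (Fin n) := {j | ∃ i, lam i = -lam j} with hs
  have hT : {μ : F | A.charpoly.IsRoot μ ∧ A.charpoly.IsRoot (-μ)} = lam '' s := by
    ext μ
    simp only [Set.mem_setOf_eq, hIsRoot, Set.mem_image, hs]
    constructor
    · rintro ⟨⟨j, rfl⟩, ⟨i, hi⟩⟩
      exact ⟨j, ⟨i, hi⟩, rfl⟩
    · rintro ⟨j, ⟨i, hi⟩, rfl⟩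
      exact ⟨⟨j, rfl⟩, ⟨i, hi⟩⟩
  have hsnd : Prod.snd '' (↑S : Set (Fin n × Fin n)) = s := by
    ext j
    simp only [Set.mem_image, Finset.coe_filter, Set.mem_setOf_eq, hS, hs, Finset.mem_filter,
      Finset.mem_univ, true_and]
    constructor
    · rintro ⟨⟨i, j'⟩, hij, rfl⟩
      exact ⟨i, by linear_combination hij⟩
    · rintro ⟨i, hi⟩
      refine ⟨(i, j), ?_, rfl⟩
      show lam i + lam j = 0
      linear_combination hi
  have hinjOn : Set.InjOn Prod.snd (↑S : Set (Fin n × Fin n)) := by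
    rintro ⟨i1, j1⟩ h1 ⟨i2, j2⟩ h2 hj
    simp only [hS, Finset.coe_filter, Set.mem_setOf_eq, Finset.mem_univ, true_and] at h1 h2
    simp only at hj
    subst hj
    have : lam i1 = lam i2 := by linear_combination h1 - h2
    rw [hinj this]
  calc S.card = (↑S : Set (Fin n × Fin n)).ncard := (Set.ncard_coe_finset S).symm
  _ = (Prod.snd '' (↑S : Set (Fin n × Fin n))).ncard := (Set.ncard_image_of_injOn hinjOn).symm
  _ = s.ncard := by rw [hsnd]
  _ = (lam '' s).ncard := (Set.ncard_image_of_injective s hinj).symm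
  _ = _ := by rw [hT]
end
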